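/- For n ≥ 2, the corank (dimension of the kernel over ℚ) of the matrix A_n = [[−E_n, −X_nᵀ],[−X_n, −n·E_{n(n-1)/2}]] equals n − 1. -/

import Mathlib

open Matrix

/-- Index type for the rows of `X n`: pairs `(i,j)` with `i < j` in `Fin n`. -/
abbrev PairIdx (n : ℕ) := {p : Fin n × Fin n // p.1 < p.2}

/-- The matrix `X n` over `ℚ` whose row indexed by `(i,j)` (with `i < j`) is `e i - e j`. -/
def XmatQ (n : ℕ) : Matrix (PairIdx n) (Fin n) ℚ :=
  Matrix.of fun p k => (if k = p.1.1 then 1 else 0) - (if k = p.1.2 then 1 else 0)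

/-- The weighted incidence matrix `A n = [[−E, −Xᵀ],[−X, −n·E]]` over `ℚ`. -/
def AmatQ (n : ℕ) : Matrix (Fin n ⊕ PairIdx n) (Fin n ⊕ PairIdx n) ℚ :=
  Matrix.fromBlocks (-1) (-(XmatQ n)ᵀ) (-(XmatQ n)) (-((n : ℚ) • 1))

lemma Xmul (n : ℕ) (u : Fin n → ℚ) (p : PairIdx n) :
    (XmatQ n).mulVec u p = u p.1.1 - u p.1.2 := by
  have h := p.2
  simp [XmatQ, mulVec, dotProduct, sub_mul, Finset.sum_sub_distrib]

lemma XtX (n : ℕ) (u : Fin n → ℚ) (k : Fin n) :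
    (XmatQ n)ᵀ.mulVec ((XmatQ n).mulVec u) k = n * u k - ∑ i, u i := by
  classical
  have h1 : (XmatQ n)ᵀ.mulVec ((XmatQ n).mulVec u) k
      = ∑ p : PairIdx n, ((if k = p.1.1 then 1 else 0) - (if k = p.1.2 then 1 else 0))
          * (u p.1.1 - u p.1.2) := by
    simp only [mulVec, dotProduct, transpose_apply, XmatQ, of_apply]
    refine Finset.sum_congr rfl (fun p _ => ?_)
    congr 1
    simp [sub_mul, Finset.sum_sub_distrib]
  rw [h1]
  set F : Fin n × Fin n → ℚ := fun p =>
    ((if k = p.1 then 1 else 0) - (if k = p.2 then 1 else 0)) * (u p.1 - u p.2) with hF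
  have h2 : (∑ p : PairIdx n, ((if k = p.1.1 then 1 else 0) - (if k = p.1.2 then 1 else 0))
          * (u p.1.1 - u p.1.2))
      = ∑ p ∈ Finset.univ.filter (fun p : Fin n × Fin n => p.1 < p.2), F p := by
    rw [Finset.sum_subtype (Finset.univ.filter (fun p : Fin n × Fin n => p.1 < p.2))
      (p := fun p : Fin n × Fin n => p.1 < p.2) (fun x => by simp) F]
  rw [h2]
  have hswap : (∑ p ∈ Finset.univ.filter (fun p : Fin n × Fin n => p.2 < p.1), F p)
      = ∑ p ∈ Finset.univ.filter (fun p : Fin n × Fin n => p.1 < p.2), F p := by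
    apply Finset.sum_nbij' (fun p => Prod.swap p) (fun p => Prod.swap p)
    · intro a ha; simp at ha ⊢; exact ha
    · intro a ha; simp at ha ⊢; exact ha
    · intro a _; simp
    · intro a _; simp
    · intro a _; simp [hF]; ring
  have hfull : (∑ p : Fin n × Fin n, F p)
      = (∑ p ∈ Finset.univ.filter (fun p : Fin n × Fin n => p.1 < p.2), F p)
        + ∑ p ∈ Finset.univ.filter (fun p : Fin n × Fin n => p.2 < p.1), F p := by
    rw [← Finset.sum_filter_add_sum_filter_not Finset.univ (fun p : Fin n × Fin n => p.1 < p.2) F]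
    congr 1
    rw [← Finset.sum_filter_add_sum_filter_not
      (Finset.univ.filter (fun p : Fin n × Fin n => ¬ p.1 < p.2))
      (fun p : Fin n × Fin n => p.2 < p.1) F]
    have : ∀ p ∈ (Finset.univ.filter (fun p : Fin n × Fin n => ¬ p.1 < p.2)).filter
        (fun p : Fin n × Fin n => ¬ p.2 < p.1), F p = 0 := by
      intro p hp
      simp at hp
      have : p.1 = p.2 := le_antisymm hp.2 hp.1
      simp [hF, this]
    rw [Finset.sum_eq_zero this, add_zero, Finset.filter_filter]
    apply Finset.sum_congr _ (fun _ _ => rfl)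
    ext p
    simp only [Finset.mem_filter, Finset.mem_univ, true_and]
    constructor
    · exact fun h => h.2
    · intro h; exact ⟨not_lt.mpr h.le, h⟩
  have hcompute : (∑ p : Fin n × Fin n, F p) = 2 * (n * u k - ∑ i, u i) := by
    rw [Fintype.sum_prod_type]
    simp only [hF, sub_mul, mul_sub, ite_mul, one_mul, zero_mul]
    push_cast
    simp [Finset.sum_sub_distrib, Finset.sum_ite_eq', Finset.mul_sum, Finset.card_univ]
    rw [← Finset.mul_sum]
    ring
  have : (∑ p ∈ Finset.univ.filter (fun p : Fin n × Fin n => p.1 < p.2), F p)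
      = n * u k - ∑ i, u i := by
    have := hfull
    rw [hswap, hcompute] at this
    linarith
  exact this

/-- The sum-of-coordinates functional. -/
def sumL (n : ℕ) : (Fin n → ℚ) →ₗ[ℚ] ℚ where
  toFun u := ∑ i, u i
  map_add' := by intros; simp [Finset.sum_add_distrib]
  map_smul' := by intros; simp [Finset.mul_sum]

/-- The parametrization of the kernel by the first block. -/
def Phi (n : ℕ) : (Fin n → ℚ) →ₗ[ℚ] (Fin n ⊕ PairIdx n → ℚ) where
  toFun u := Sum.elim u (fun p => (u p.1.2 - u p.1.1) / n)
  map_add' := by intro a b; funext x; cases x <;> simp <;> ring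
  map_smul' := by intro c a; funext x; cases x <;> simp <;> ring

lemma Phi_inj (n : ℕ) : Function.Injective (Phi n) := by
  intro a b h
  funext k
  exact congrFun h (Sum.inl k)

lemma Amul (n : ℕ) (v : Fin n ⊕ PairIdx n → ℚ) :
    (AmatQ n).mulVec v = Sum.elim
      (fun k => -(v (Sum.inl k)) - (XmatQ n)ᵀ.mulVec (v ∘ Sum.inr) k)
      (fun p => -((XmatQ n).mulVec (v ∘ Sum.inl)) p - n * v (Sum.inr p)) := by
  conv_lhs => rw [← Sum.elim_comp_inl_inr v]
  rw [AmatQ, fromBlocks_mulVec]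
  funext x
  cases x with
  | inl k => simp [neg_mulVec, smul_mulVec]; ring
  | inr p => simp [neg_mulVec, smul_mulVec]; ring

lemma ker_eq (n : ℕ) (hn : n ≠ 0) :
    LinearMap.ker (Matrix.mulVecLin (AmatQ n))
      = Submodule.map (Phi n) (LinearMap.ker (sumL n)) := by
  have hn' : (n : ℚ) ≠ 0 := Nat.cast_ne_zero.mpr hn
  ext v
  simp only [LinearMap.mem_ker, Submodule.mem_map, mulVecLin_apply]
  constructor
  · intro hv
    rw [Amul] at hv
    set x : Fin n → ℚ := v ∘ Sum.inl with hx
    have hinl : ∀ k, -(x k) - (XmatQ n)ᵀ.mulVec (v ∘ Sum.inr) k = 0 :=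
      fun k => congrFun hv (Sum.inl k)
    have hinr : ∀ p, -((XmatQ n).mulVec x) p - n * v (Sum.inr p) = 0 :=
      fun p => congrFun hv (Sum.inr p)
    have h2 : ∀ p : PairIdx n, v (Sum.inr p) = (x p.1.2 - x p.1.1) / n := by
      intro p
      have := hinr p
      rw [Xmul] at this
      field_simp at this ⊢
      linarith
    have hy : (v ∘ Sum.inr) = (-(1/n) : ℚ) • ((XmatQ n).mulVec x) := by
      funext p
      simp only [Function.comp_apply, Pi.smul_apply, smul_eq_mul, Xmul]
      rw [h2]
      field_simp
      ring
    have hsum : ∑ i, x i = 0 := by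
      have k0 : Fin n := ⟨0, Nat.pos_of_ne_zero hn⟩
      have := hinl k0
      rw [hy, mulVec_smul, Pi.smul_apply, XtX] at this
      have : -(x k0) + (1/n) * ((n : ℚ) * x k0 - ∑ i, x i) = 0 := by
        rw [smul_eq_mul] at this; linarith
      field_simp at this
      linarith
    refine ⟨x, hsum, ?_⟩
    funext z
    cases z with
    | inl k => rfl
    | inr p => simp [Phi, (h2 p).symm]
  · rintro ⟨u, hu, rfl⟩
    have huval : ∑ i, u i = 0 := hu
    have hy : ((Phi n u) ∘ Sum.inr) = (-(1/n) : ℚ) • ((XmatQ n).mulVec u) := by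
      funext p
      simp only [Function.comp_apply, Pi.smul_apply, smul_eq_mul, Xmul, Phi,
        LinearMap.coe_mk, AddHom.coe_mk, Sum.elim_inr]
      field_simp
      ring
    rw [Amul]
    funext z
    cases z with
    | inl k =>
      have hx : (Phi n u) ∘ Sum.inl = u := rfl
      simp only [Sum.elim_inl, hx, hy, mulVec_smul, Pi.smul_apply, XtX, smul_eq_mul]
      have : (Phi n u) (Sum.inl k) = u k := rfl
      rw [this, huval, Pi.zero_apply]
      field_simp
      ring
    | inr p =>
      have hx : (Phi n u) ∘ Sum.inl = u := rfl
      simp only [Sum.elim_inr, hx, Xmul, Phi, LinearMap.coe_mk, AddHom.coe_mk]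
      simp only [Function.comp_apply, Sum.elim_inl, Pi.zero_apply]
      field_simp
      ring

lemma ker_sumL (n : ℕ) (hn : 1 ≤ n) :
    Module.finrank ℚ (LinearMap.ker (sumL n)) = n - 1 := by
  have hr := LinearMap.finrank_range_add_finrank_ker (sumL n)
  have hsurj : Function.Surjective (sumL n) := by
    intro c
    refine ⟨fun i => if i = ⟨0, hn⟩ then c else 0, ?_⟩
    simp [sumL]
  have hrange : LinearMap.range (sumL n) = ⊤ := LinearMap.range_eq_top.mpr hsurj
  rw [hrange, finrank_top, Module.finrank_self, Module.finrank_pi] at hr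
  simp only [Fintype.card_fin] at hr
  omega

/-- For `n ≥ 2`, the corank of `A n` over `ℚ` (the dimension of its kernel) equals `n − 1`. -/
theorem stmt8 (n : ℕ) (hn : 2 ≤ n) :
    Module.finrank ℚ (LinearMap.ker (Matrix.mulVecLin (AmatQ n))) = n - 1 := by
  rw [ker_eq n (by omega)]
  rw [← LinearEquiv.finrank_eq
    (Submodule.equivMapOfInjective (Phi n) (Phi_inj n) (LinearMap.ker (sumL n)))]
  exact ker_sumL n (by omega)
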